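/- Let F : ℝ → ℝ be C² with F'' ≥ ε > 0, G : ℝ → ℝ C² convex, and for fixed parameter y ∈ ℝ let μ_y be the probability measure with density proportional to exp(-F(x) - G(x - y)) dx. Define δ(f) = sup_x |f'(x)|/√(F''(x)) and C = sup_{x,y} |G''(x-y)|/(√(F''(x))√(F''(y))). Then for every C¹ function f(x) (independent of y) with δ(f) < ∞, the function y ↦ ∫ f dμ_y is differentiable and sup_y |d/dy ∫ f dμ_y| / √(F''(y)) ≤ C · δ(f). -/

import Mathlib

open MeasureTheory

open Metric Set
open scoped ENNReal NNReal

private lemma cs_integral {α : Type*} [MeasurableSpace α] {μ : Measure α} {u v : α → ℝ}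
    (hu : Integrable (fun a => u a ^ 2) μ) (hv : Integrable (fun a => v a ^ 2) μ)
    (huv : Integrable (fun a => u a * v a) μ) :
    (∫ a, u a * v a ∂μ) ^ 2 ≤ (∫ a, u a ^ 2 ∂μ) * (∫ a, v a ^ 2 ∂μ) := by
  set A := ∫ a, u a ^ 2 ∂μ with hA
  set C := ∫ a, v a ^ 2 ∂μ with hC
  set B := ∫ a, u a * v a ∂μ with hB
  have key : ∀ s : ℝ, 0 ≤ A * (s * s) + (-2 * B) * s + C := by
    intro s
    have h0 : 0 ≤ ∫ a, (s * u a - v a) ^ 2 ∂μ := integral_nonneg fun a => sq_nonneg _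
    have hexp : ∫ a, (s * u a - v a) ^ 2 ∂μ
        = s ^ 2 * A - 2 * s * B + C := by
      have : (fun a => (s * u a - v a) ^ 2)
          = fun a => s ^ 2 * u a ^ 2 - 2 * s * (u a * v a) + v a ^ 2 := by
        funext a; ring
      rw [this]
      rw [show (fun a => s ^ 2 * u a ^ 2 - 2 * s * (u a * v a) + v a ^ 2)
          = (fun a => ((fun x => s ^ 2 * u x ^ 2) - fun x => 2 * s * (u x * v x)) a
              + v a ^ 2) from rfl]
      rw [integral_add ((hu.const_mul _).sub (huv.const_mul _)) hv]
      rw [show ((fun x => s ^ 2 * u x ^ 2) - fun x => 2 * s * (u x * v x))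
          = (fun x => s ^ 2 * u x ^ 2 - 2 * s * (u x * v x)) from rfl]
      rw [integral_sub (hu.const_mul _) (huv.const_mul _), integral_const_mul,
        integral_const_mul]
    nlinarith [h0, hexp]
  have hd := discrim_le_zero key
  rw [discrim] at hd
  nlinarith [hd]


private lemma measure_facts
    (F G : ℝ → ℝ) (hFc : Continuous F) (hGc : Continuous G)
    (Z : ℝ → ℝ) (μ : ℝ → Measure ℝ)
    (hμ : ∀ y, μ y = (volume : Measure ℝ).withDensity
      (fun x => ENNReal.ofReal (Real.exp (-F x - G (x - y)) / Z y)))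
    (hprob : ∀ y, IsProbabilityMeasure (μ y)) (y : ℝ) :
    0 < Z y ∧ Integrable (fun x => Real.exp (-F x - G (x - y))) ∧
      (∫⁻ x, ENNReal.ofReal (Real.exp (-F x - G (x - y))) = ENNReal.ofReal (Z y)) ∧
      (∫ x, Real.exp (-F x - G (x - y)) = Z y) := by
  set p : ℝ → ℝ := fun x => Real.exp (-F x - G (x - y)) with hp
  have hpc : Continuous p :=
    Real.continuous_exp.comp ((hFc.neg).sub (hGc.comp (continuous_id.sub continuous_const)))
  have hppos : ∀ x, 0 < p x := fun x => Real.exp_pos _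
  have huniv : ∫⁻ x, ENNReal.ofReal (p x / Z y) = 1 := by
    have h1 : (μ y) Set.univ = 1 := (hprob y).measure_univ
    rw [hμ y] at h1
    simpa [withDensity_apply _ MeasurableSet.univ] using h1
  have hZpos : 0 < Z y := by
    by_contra h
    push_neg at h
    have hz : ∀ x, ENNReal.ofReal (p x / Z y) = 0 := by
      intro x
      apply ENNReal.ofReal_eq_zero.2
      exact div_nonpos_iff.2 (Or.inl ⟨(hppos x).le, h⟩)
    rw [lintegral_congr hz] at huniv
    simp at huniv
  have hzne : ENNReal.ofReal (Z y) ≠ 0 := by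
    simp only [ne_eq, ENNReal.ofReal_eq_zero, not_le]; exact hZpos
  have hlin : ∫⁻ x, ENNReal.ofReal (p x) = ENNReal.ofReal (Z y) := by
    have hcongr : ∀ x, ENNReal.ofReal (p x / Z y)
        = ENNReal.ofReal (p x) * (ENNReal.ofReal (Z y))⁻¹ := by
      intro x
      rw [div_eq_mul_inv, ENNReal.ofReal_mul (hppos x).le,
        ENNReal.ofReal_inv_of_pos hZpos]
    rw [lintegral_congr hcongr] at huniv
    rw [lintegral_mul_const' _ _ (by simpa using hZpos : (ENNReal.ofReal (Z y))⁻¹ ≠ ⊤)] at huniv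
    have h2 := congrArg (· * ENNReal.ofReal (Z y)) huniv
    simpa [mul_assoc, ENNReal.inv_mul_cancel hzne ENNReal.ofReal_ne_top] using h2
  have hint : Integrable p := by
    refine ⟨hpc.aestronglyMeasurable, ?_⟩
    rw [hasFiniteIntegral_iff_ofReal (Filter.Eventually.of_forall fun x => (hppos x).le)]
    rw [hlin]
    exact ENNReal.ofReal_lt_top
  have hintegral : ∫ x, p x = Z y := by
    rw [integral_eq_lintegral_of_nonneg_ae (Filter.Eventually.of_forall fun x => (hppos x).le)
      hpc.aestronglyMeasurable, hlin, ENNReal.toReal_ofReal hZpos.le]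
  exact ⟨hZpos, hint, hlin, hintegral⟩

private lemma interval_facts
    (F G : ℝ → ℝ) (ε : ℝ) (hε : 0 < ε) (hF : ContDiff ℝ 2 F) (hG : ContDiff ℝ 2 G)
    (hF'' : ∀ x, ε ≤ deriv (deriv F) x) (hGconv : ∀ x, 0 ≤ deriv (deriv G) x)
    (y : ℝ) (φ : ℝ → ℝ) (hφ : ContDiff ℝ 1 φ) (κ : ℝ)
    (hκ : ∀ x, |deriv φ x| ≤ κ * Real.sqrt (deriv (deriv F) x))
    (c d : ℝ) (hcd : c ≤ d) :
    (φ d - φ c) ^ 2 ≤ κ ^ 2 * ((∫ t in c..d, deriv (deriv F) t / (deriv (deriv F) t + deriv (deriv G) (t - y))) *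
      ∫ t in c..d, (deriv (deriv F) t + deriv (deriv G) (t - y))) := by
  have hF1 : ContDiff ℝ 1 (deriv F) := by
    have h : ContDiff ℝ (1 + 1 : ℕ) F := by exact_mod_cast hF
    exact (contDiff_succ_iff_deriv.mp (by exact_mod_cast h)).2.2
  have hG1 : ContDiff ℝ 1 (deriv G) := by
    have h : ContDiff ℝ (1 + 1 : ℕ) G := by exact_mod_cast hG
    exact (contDiff_succ_iff_deriv.mp (by exact_mod_cast h)).2.2
  have hF''c : Continuous (deriv (deriv F)) := (contDiff_one_iff_deriv.mp hF1).2
  have hG''c : Continuous (deriv (deriv G)) := (contDiff_one_iff_deriv.mp hG1).2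
  set F'' : ℝ → ℝ := deriv (deriv F) with hF''def
  set G'' : ℝ → ℝ := deriv (deriv G) with hG''def
  set H'' : ℝ → ℝ := fun t => F'' t + G'' (t - y) with hH''def
  have hH''c : Continuous H'' := hF''c.add (hG''c.comp (continuous_id.sub continuous_const))
  have hF''pos : ∀ t, 0 < F'' t := fun t => lt_of_lt_of_le hε (hF'' t)
  have hH''pos : ∀ t, 0 < H'' t := fun t => lt_of_lt_of_le (hF''pos t)
    (le_add_of_nonneg_right (hGconv _))
  set r : ℝ → ℝ := fun t => F'' t / H'' t with hrdef
  have hrc : Continuous r := hF''c.div hH''c fun t => (hH''pos t).ne'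
  have hr0 : ∀ t, 0 ≤ r t := fun t => div_nonneg (hF''pos t).le (hH''pos t).le
  have hκ0 : 0 ≤ κ := by
    have h1 := hκ 0
    have h2 : 0 < Real.sqrt (F'' 0) := Real.sqrt_pos.2 (hF''pos 0)
    nlinarith [abs_nonneg (deriv φ 0)]
  -- step 1 : |φ d - φ c| ≤ κ * ∫ sqrt F''
  have hφd : ∀ x, HasDerivAt φ (deriv φ x) x := fun x => ((hφ.differentiable one_ne_zero) x).hasDerivAt
  have hφ'c : Continuous (deriv φ) := (contDiff_one_iff_deriv.mp hφ).2
  have hsqrtc : Continuous (fun t => Real.sqrt (F'' t)) := hF''c.sqrt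
  have h1 : |φ d - φ c| ≤ κ * ∫ t in c..d, Real.sqrt (F'' t) := by
    have heq : ∫ t in c..d, deriv φ t = φ d - φ c :=
      intervalIntegral.integral_eq_sub_of_hasDerivAt (fun t _ => hφd t)
        (hφ'c.intervalIntegrable c d)
    rw [← heq]
    calc |∫ t in c..d, deriv φ t| ≤ ∫ t in c..d, |deriv φ t| :=
          intervalIntegral.abs_integral_le_integral_abs hcd
      _ ≤ ∫ t in c..d, κ * Real.sqrt (F'' t) := by
          apply intervalIntegral.integral_mono_on hcd
            (hφ'c.abs.intervalIntegrable c d)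
            ((continuous_const.mul hsqrtc).intervalIntegrable c d)
          exact fun t _ => hκ t
      _ = κ * ∫ t in c..d, Real.sqrt (F'' t) := intervalIntegral.integral_const_mul κ _
  -- step 2 : Cauchy-Schwarz
  have h2 : (∫ t in c..d, Real.sqrt (F'' t)) ^ 2
      ≤ (∫ t in c..d, r t) * ∫ t in c..d, H'' t := by
    have hsq : ∀ t, Real.sqrt (F'' t) = Real.sqrt (r t) * Real.sqrt (H'' t) := by
      intro t
      rw [← Real.sqrt_mul (hr0 t), div_mul_cancel₀ _ (hH''pos t).ne']
    have hcs := cs_integral (μ := volume.restrict (Set.Ioc c d))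
      (u := fun t => Real.sqrt (r t)) (v := fun t => Real.sqrt (H'' t))
      ((hrc.sqrt.pow 2).integrableOn_Ioc) ((hH''c.sqrt.pow 2).integrableOn_Ioc)
      ((hrc.sqrt.mul hH''c.sqrt).integrableOn_Ioc)
    rw [intervalIntegral.integral_of_le hcd, intervalIntegral.integral_of_le hcd,
      intervalIntegral.integral_of_le hcd]
    calc (∫ t in Set.Ioc c d, Real.sqrt (F'' t)) ^ 2
        = (∫ t in Set.Ioc c d, Real.sqrt (r t) * Real.sqrt (H'' t)) ^ 2 := by
          congr 1; exact integral_congr_ae (Filter.Eventually.of_forall fun t => hsq t)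
      _ ≤ (∫ t in Set.Ioc c d, Real.sqrt (r t) ^ 2) * ∫ t in Set.Ioc c d, Real.sqrt (H'' t) ^ 2 :=
          hcs
      _ = (∫ t in Set.Ioc c d, r t) * ∫ t in Set.Ioc c d, H'' t := by
          congr 1
          · exact integral_congr_ae (Filter.Eventually.of_forall fun t =>
              Real.sq_sqrt (hr0 t))
          · exact integral_congr_ae (Filter.Eventually.of_forall fun t =>
              Real.sq_sqrt (hH''pos t).le)
  have h3 : 0 ≤ ∫ t in c..d, Real.sqrt (F'' t) :=
    intervalIntegral.integral_nonneg hcd fun t _ => Real.sqrt_nonneg _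
  calc (φ d - φ c) ^ 2 = |φ d - φ c| ^ 2 := (sq_abs _).symm
    _ ≤ (κ * ∫ t in c..d, Real.sqrt (F'' t)) ^ 2 := by
        apply pow_le_pow_left₀ (abs_nonneg _) h1 2
    _ = κ ^ 2 * (∫ t in c..d, Real.sqrt (F'' t)) ^ 2 := by ring
    _ ≤ κ ^ 2 * ((∫ t in c..d, r t) * ∫ t in c..d, H'' t) := by
        apply mul_le_mul_of_nonneg_left h2 (sq_nonneg κ)

private lemma core_bound
    (F G : ℝ → ℝ) (ε : ℝ) (hε : 0 < ε) (hF : ContDiff ℝ 2 F) (hG : ContDiff ℝ 2 G)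
    (hF'' : ∀ x, ε ≤ deriv (deriv F) x) (hGconv : ∀ x, 0 ≤ deriv (deriv G) x)
    (Z : ℝ → ℝ) (μ : ℝ → Measure ℝ)
    (hμ : ∀ y, μ y = (volume : Measure ℝ).withDensity
      (fun x => ENNReal.ofReal (Real.exp (-F x - G (x - y)) / Z y)))
    (hprob : ∀ y, IsProbabilityMeasure (μ y))
    (y : ℝ) (φ : ℝ → ℝ) (hφ : ContDiff ℝ 1 φ) (κ : ℝ)
    (hκ : ∀ x, |deriv φ x| ≤ κ * Real.sqrt (deriv (deriv F) x)) :
    ∃ a : ℝ, Integrable (fun x => (φ x - φ a) ^ 2) (μ y) ∧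
      ∫ x, (φ x - φ a) ^ 2 ∂(μ y) ≤ κ ^ 2 := by
  obtain ⟨hZpos, hpint, hplin, hpZ⟩ :=
    measure_facts F G hF.continuous hG.continuous Z μ hμ hprob y
  set p : ℝ → ℝ := fun x => Real.exp (-F x - G (x - y)) with hpdef
  have hppos : ∀ x, 0 < p x := fun x => Real.exp_pos _
  have hpc : Continuous p := Real.continuous_exp.comp
    ((hF.continuous.neg).sub (hG.continuous.comp (continuous_id.sub continuous_const)))
  -- regularity
  have hF1 : ContDiff ℝ 1 (deriv F) := by
    have h : ContDiff ℝ (1 + 1 : ℕ) F := by exact_mod_cast hF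
    exact (contDiff_succ_iff_deriv.mp (by exact_mod_cast h)).2.2
  have hG1 : ContDiff ℝ 1 (deriv G) := by
    have h : ContDiff ℝ (1 + 1 : ℕ) G := by exact_mod_cast hG
    exact (contDiff_succ_iff_deriv.mp (by exact_mod_cast h)).2.2
  have hF''c : Continuous (deriv (deriv F)) := (contDiff_one_iff_deriv.mp hF1).2
  have hG''c : Continuous (deriv (deriv G)) := (contDiff_one_iff_deriv.mp hG1).2
  set F'' : ℝ → ℝ := deriv (deriv F) with hF''def
  set G'' : ℝ → ℝ := deriv (deriv G) with hG''def
  set H' : ℝ → ℝ := fun x => deriv F x + deriv G (x - y) with hH'def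
  set H'' : ℝ → ℝ := fun t => F'' t + G'' (t - y) with hH''def
  have hH'c : Continuous H' := (hF1.continuous).add
    ((hG1.continuous).comp (continuous_id.sub continuous_const))
  have hH''c : Continuous H'' := hF''c.add (hG''c.comp (continuous_id.sub continuous_const))
  have hF''pos : ∀ t, 0 < F'' t := fun t => lt_of_lt_of_le hε (hF'' t)
  have hH''pos : ∀ t, 0 < H'' t := fun t => lt_of_lt_of_le (hF''pos t)
    (le_add_of_nonneg_right (hGconv _))
  have hH'deriv : ∀ x, HasDerivAt H' (H'' x) x := by
    intro x
    have h1 : HasDerivAt (deriv F) (F'' x) x := ((hF1.differentiable one_ne_zero) x).hasDerivAt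
    have h2 : HasDerivAt (fun x => deriv G (x - y)) (G'' (x - y)) x := by
      simpa [Function.comp_def] using ((hG1.differentiable one_ne_zero) (x - y)).hasDerivAt.comp x
        ((hasDerivAt_id x).sub_const y)
    exact h1.add h2
  have hH'fc : ∀ c d : ℝ, ∫ t in c..d, H'' t = H' d - H' c := fun c d =>
    intervalIntegral.integral_eq_sub_of_hasDerivAt (fun t _ => hH'deriv t)
      (hH''c.intervalIntegrable c d)
  have hH'incr : ∀ c d : ℝ, c ≤ d → H' c + ε * (d - c) ≤ H' d := by
    intro c d hcd
    have hlb : ε * (d - c) ≤ ∫ t in c..d, H'' t := by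
      have hconst : ∫ t in c..d, (ε : ℝ) = ε * (d - c) := by
        simp [intervalIntegral.integral_const]; ring
      rw [← hconst]
      exact intervalIntegral.integral_mono_on hcd intervalIntegrable_const
        (hH''c.intervalIntegrable c d) (fun t _ => (hF'' t).trans
          (le_add_of_nonneg_right (hGconv _)))
    have := hH'fc c d
    linarith
  -- zero of H'
  obtain ⟨a, ha⟩ : ∃ a, H' a = 0 := by
    set T : ℝ := (|H' 0| + 1) / ε with hT
    have hTpos : 0 < T := by positivity
    have hεT : ε * T = |H' 0| + 1 := by
      rw [hT]; field_simp
    have h1 : 0 < H' T := by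
      have := hH'incr 0 T hTpos.le
      have habs := neg_abs_le (H' 0)
      nlinarith
    have h2 : H' (-T) < 0 := by
      have := hH'incr (-T) 0 (by linarith)
      have habs := le_abs_self (H' 0)
      nlinarith
    obtain ⟨a, _, ha⟩ := intermediate_value_Icc (by linarith : -T ≤ T)
      (hH'c.continuousOn) ⟨h2.le, h1.le⟩
    exact ⟨a, ha⟩
  have hH'pos : ∀ x, a ≤ x → 0 ≤ H' x := by
    intro x hx
    have := hH'incr a x hx
    nlinarith [mul_nonneg hε.le (sub_nonneg.2 hx)]
  have hH'neg : ∀ x, x ≤ a → H' x ≤ 0 := by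
    intro x hx
    have := hH'incr x a hx
    nlinarith [mul_nonneg hε.le (sub_nonneg.2 hx)]
  -- w
  set r : ℝ → ℝ := fun t => F'' t / H'' t with hrdef
  have hrc : Continuous r := hF''c.div hH''c fun t => (hH''pos t).ne'
  have hr0 : ∀ t, 0 ≤ r t := fun t => div_nonneg (hF''pos t).le (hH''pos t).le
  have hr1 : ∀ t, r t ≤ 1 := fun t =>
    div_le_one_of_le₀ (le_add_of_nonneg_right (hGconv _)) (hH''pos t).le
  set w : ℝ → ℝ := fun x => ∫ t in a..x, r t with hwdef
  have hwderiv : ∀ x, HasDerivAt w (r x) x := fun x =>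
    intervalIntegral.integral_hasDerivAt_right (hrc.intervalIntegrable a x)
      (hrc.stronglyMeasurableAtFilter _ _) hrc.continuousAt
  have hwc : Continuous w := by
    rw [continuous_iff_continuousAt]; exact fun x => (hwderiv x).continuousAt
  have hwpos : ∀ x, a ≤ x → 0 ≤ w x := fun x hx =>
    intervalIntegral.integral_nonneg hx fun t _ => hr0 t
  have hwneg : ∀ x, x ≤ a → w x ≤ 0 := by
    intro x hx
    have hws : w x = -∫ t in x..a, r t := by
      rw [hwdef]; exact intervalIntegral.integral_symm x a
    rw [hws, neg_nonpos]
    exact intervalIntegral.integral_nonneg hx fun t _ => hr0 t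
  have hwH' : ∀ x, 0 ≤ w x * H' x := by
    intro x
    rcases le_total a x with hax | hxa
    · exact mul_nonneg (hwpos x hax) (hH'pos x hax)
    · exact mul_nonneg_iff.2 (Or.inr ⟨hwneg x hxa, hH'neg x hxa⟩)
  -- pointwise bound
  have hptwise : ∀ x, (φ x - φ a) ^ 2 ≤ κ ^ 2 * (w x * H' x) := by
    intro x
    rcases le_total a x with hax | hxa
    · have h := interval_facts F G ε hε hF hG hF'' hGconv y φ hφ κ hκ a x hax
      have hw : (∫ t in a..x, F'' t / H'' t) = w x := rfl
      have hH : (∫ t in a..x, H'' t) = H' x := by rw [hH'fc a x, ha, sub_zero]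
      calc (φ x - φ a) ^ 2
          ≤ κ ^ 2 * ((∫ t in a..x, F'' t / H'' t) * ∫ t in a..x, H'' t) := h
        _ = κ ^ 2 * (w x * H' x) := by rw [hw, hH]
    · have h := interval_facts F G ε hε hF hG hF'' hGconv y φ hφ κ hκ x a hxa
      have hsq : (φ a - φ x) ^ 2 = (φ x - φ a) ^ 2 := by ring
      have hw : (∫ t in x..a, F'' t / H'' t) = -w x := by
        have : w x = -∫ t in x..a, r t := by
          rw [hwdef]; exact intervalIntegral.integral_symm x a
        rw [this, neg_neg]
      have hH : (∫ t in x..a, H'' t) = -H' x := by rw [hH'fc x a, ha, zero_sub]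
      calc (φ x - φ a) ^ 2 = (φ a - φ x) ^ 2 := hsq.symm
        _ ≤ κ ^ 2 * ((∫ t in x..a, F'' t / H'' t) * ∫ t in x..a, H'' t) := h
        _ = κ ^ 2 * (w x * H' x) := by rw [hw, hH]; ring
  -- q and IBP
  set q : ℝ → ℝ := fun x => w x * H' x * p x with hqdef
  have hq0 : ∀ x, 0 ≤ q x := fun x => mul_nonneg (hwH' x) (hppos x).le
  have hqc : Continuous q := (hwc.mul hH'c).mul hpc
  have hpd : ∀ x, HasDerivAt p (-H' x * p x) x := by
    intro x
    have h1 : HasDerivAt (fun x => -F x - G (x - y)) (-H' x) x := by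
      have hFd : HasDerivAt F (deriv F x) x :=
        ((hF.differentiable (by norm_num)) x).hasDerivAt
      have hGd : HasDerivAt (fun x => G (x - y)) (deriv G (x - y)) x := by
        simpa [Function.comp_def] using ((hG.differentiable (by norm_num)) (x - y)).hasDerivAt.comp x
          ((hasDerivAt_id x).sub_const y)
      have := (hFd.neg).sub hGd
      exact this.congr_deriv (by rw [hH'def]; ring)
    have := h1.exp
    exact this.congr_deriv (by ring)
  have hWd : ∀ x, HasDerivAt (fun x => w x * p x) (r x * p x - q x) x := by
    intro x
    have := (hwderiv x).mul (hpd x)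
    exact this.congr_deriv (by rw [hqdef]; ring)
  have hWP : ∀ c d : ℝ, (∫ t in c..d, (r t * p t - q t)) = w d * p d - w c * p c :=
    fun c d => intervalIntegral.integral_eq_sub_of_hasDerivAt (fun t _ => hWd t)
      (((hrc.mul hpc).sub hqc).intervalIntegrable c d)
  have hwa : w a = 0 := intervalIntegral.integral_same
  have hrple : ∀ c d : ℝ, c ≤ d → (∫ t in c..d, r t * p t) ≤ ∫ t in c..d, p t := by
    intro c d hcd
    apply intervalIntegral.integral_mono_on hcd ((hrc.mul hpc).intervalIntegrable c d)
      (hpc.intervalIntegrable c d)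
    intro t _
    calc r t * p t ≤ 1 * p t := mul_le_mul_of_nonneg_right (hr1 t) (hppos t).le
      _ = p t := one_mul _
  set PR : ℝ := ∫ x in Set.Ioi a, p x with hPR
  set PL : ℝ := ∫ x in Set.Iic a, p x with hPL
  have hqIoc : ∀ n : ℕ, (∫ t in Set.Ioc a (a + n), q t) ≤ PR := by
    intro n
    have han : a ≤ a + n := le_add_of_nonneg_right (Nat.cast_nonneg n)
    rw [← intervalIntegral.integral_of_le han]
    have hsub : (∫ t in a..(a + n : ℝ), r t * p t) - (∫ t in a..(a + n : ℝ), q t)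
        = w (a + n) * p (a + n) - w a * p a := by
      rw [← intervalIntegral.integral_sub (f := fun t => r t * p t) ((hrc.mul hpc).intervalIntegrable _ _)
        (hqc.intervalIntegrable _ _)]
      exact hWP a (a + n)
    have hwp : 0 ≤ w (a + n) * p (a + n) := mul_nonneg (hwpos _ han) (hppos _).le
    rw [hwa] at hsub
    have h2 := hrple a (a + n) han
    have h3 : (∫ t in a..(a + n : ℝ), p t) ≤ PR := by
      rw [intervalIntegral.integral_of_le han]
      exact setIntegral_mono_set hpint.integrableOn
        (Filter.Eventually.of_forall fun x => (hppos x).le)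
        (HasSubset.Subset.eventuallyLE Set.Ioc_subset_Ioi_self)
    nlinarith
  have hqIocL : ∀ n : ℕ, (∫ t in Set.Ioc (a - n) a, q t) ≤ PL := by
    intro n
    have han : a - n ≤ a := by
      have : (0:ℝ) ≤ n := Nat.cast_nonneg n
      linarith
    rw [← intervalIntegral.integral_of_le han]
    have hsub : (∫ t in (a - n : ℝ)..a, r t * p t) - (∫ t in (a - n : ℝ)..a, q t)
        = w a * p a - w (a - n) * p (a - n) := by
      rw [← intervalIntegral.integral_sub (f := fun t => r t * p t) ((hrc.mul hpc).intervalIntegrable _ _)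
        (hqc.intervalIntegrable _ _)]
      exact hWP _ _
    have hwp : w (a - n) * p (a - n) ≤ 0 :=
      mul_nonpos_iff.2 (Or.inr ⟨hwneg _ han, (hppos _).le⟩)
    rw [hwa] at hsub
    have h2 := hrple (a - n) a han
    have h3 : (∫ t in (a - n : ℝ)..a, p t) ≤ PL := by
      rw [intervalIntegral.integral_of_le han]
      exact setIntegral_mono_set hpint.integrableOn
        (Filter.Eventually.of_forall fun x => (hppos x).le)
        (HasSubset.Subset.eventuallyLE Set.Ioc_subset_Iic_self)
    nlinarith
  have hPR0 : 0 ≤ PR := setIntegral_nonneg measurableSet_Ioi fun x _ => (hppos x).le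
  have hPL0 : 0 ≤ PL := setIntegral_nonneg measurableSet_Iic fun x _ => (hppos x).le
  have hsum : PL + PR = Z y := by
    have h := integral_add_compl (s := Set.Iic a) measurableSet_Iic hpint (f := p)
    rw [Set.compl_Iic] at h
    rw [hPL, hPR, h]
    exact hpZ
  have hofq : ∫⁻ x, ENNReal.ofReal (q x) ≤ ENNReal.ofReal (Z y) := by
    set m : Measure ℝ := volume.withDensity (fun x => ENNReal.ofReal (q x)) with hm
    have happ : ∀ s : Set ℝ, MeasurableSet s → m s = ∫⁻ x in s, ENNReal.ofReal (q x) :=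
      fun s hs => withDensity_apply _ hs
    have hIocR : ∀ n : ℕ, m (Set.Ioc a (a + n)) ≤ ENNReal.ofReal PR := by
      intro n
      rw [happ _ measurableSet_Ioc,
        ← ofReal_integral_eq_lintegral_ofReal hqc.integrableOn_Ioc
          (Filter.Eventually.of_forall fun x => hq0 x)]
      exact ENNReal.ofReal_le_ofReal (hqIoc n)
    have hIocL : ∀ n : ℕ, m (Set.Ioc (a - n) a) ≤ ENNReal.ofReal PL := by
      intro n
      rw [happ _ measurableSet_Ioc,
        ← ofReal_integral_eq_lintegral_ofReal hqc.integrableOn_Ioc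
          (Filter.Eventually.of_forall fun x => hq0 x)]
      exact ENNReal.ofReal_le_ofReal (hqIocL n)
    have hIoi : m (Set.Ioi a) ≤ ENNReal.ofReal PR := by
      have hU : Set.Ioi a = ⋃ n : ℕ, Set.Ioc a (a + n) := by
        ext x
        simp only [Set.mem_Ioi, Set.mem_iUnion, Set.mem_Ioc]
        constructor
        · intro hx
          obtain ⟨n, hn⟩ := exists_nat_ge (x - a)
          exact ⟨n, hx, by linarith⟩
        · rintro ⟨n, h1, _⟩; exact h1
      have hmono : Monotone fun n : ℕ => Set.Ioc a (a + n) := by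
        intro i j hij
        have : (i:ℝ) ≤ j := Nat.cast_le.2 hij
        exact Set.Ioc_subset_Ioc le_rfl (by linarith)
      rw [hU, hmono.measure_iUnion]
      exact iSup_le hIocR
    have hIic : m (Set.Iic a) ≤ ENNReal.ofReal PL := by
      have hU : Set.Iic a = ⋃ n : ℕ, Set.Ioc (a - n) a := by
        ext x
        simp only [Set.mem_Iic, Set.mem_iUnion, Set.mem_Ioc]
        constructor
        · intro hx
          obtain ⟨n, hn⟩ := exists_nat_gt (a - x)
          exact ⟨n, by linarith, hx⟩
        · rintro ⟨n, _, h2⟩; exact h2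
      have hmono : Monotone fun n : ℕ => Set.Ioc (a - n) a := by
        intro i j hij
        have : (i:ℝ) ≤ j := Nat.cast_le.2 hij
        exact Set.Ioc_subset_Ioc (by linarith) le_rfl
      rw [hU, hmono.measure_iUnion]
      exact iSup_le hIocL
    have htot : ∫⁻ x, ENNReal.ofReal (q x) = m (Set.Iic a) + m (Set.Ioi a) := by
      have h1 : m Set.univ = ∫⁻ x, ENNReal.ofReal (q x) := by
        rw [happ _ MeasurableSet.univ]
        simp [Measure.restrict_univ]
      rw [← h1, ← Set.Iic_union_Ioi (a := a),
        measure_union (Set.Iic_disjoint_Ioi le_rfl) measurableSet_Ioi]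
    rw [htot]
    calc m (Set.Iic a) + m (Set.Ioi a) ≤ ENNReal.ofReal PL + ENNReal.ofReal PR :=
        add_le_add hIic hIoi
      _ = ENNReal.ofReal (PL + PR) := (ENNReal.ofReal_add hPL0 hPR0).symm
      _ = ENNReal.ofReal (Z y) := by rw [hsum]
  -- conversion to μ y
  set sq : ℝ → ℝ := fun x => (φ x - φ a) ^ 2 with hsqdef
  have hsqc : Continuous sq := (hφ.continuous.sub continuous_const).pow 2
  have hlint : ∫⁻ x, ENNReal.ofReal (sq x) ∂(μ y) ≤ ENNReal.ofReal (κ ^ 2) := by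
    rw [hμ y, lintegral_withDensity_eq_lintegral_mul _
      ((hpc.div_const _).measurable.ennreal_ofReal) (hsqc.measurable.ennreal_ofReal)]
    simp only [Pi.mul_apply]
    have hpt : ∀ x, (ENNReal.ofReal (p x / Z y) * ENNReal.ofReal (sq x))
        ≤ ENNReal.ofReal ((κ ^ 2 / Z y) * q x) := by
      intro x
      rw [← ENNReal.ofReal_mul (div_nonneg (hppos x).le hZpos.le)]
      apply ENNReal.ofReal_le_ofReal
      have h1 : sq x ≤ κ ^ 2 * (w x * H' x) := hptwise x
      have h2 : 0 ≤ p x / Z y := div_nonneg (hppos x).le hZpos.le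
      calc p x / Z y * sq x ≤ p x / Z y * (κ ^ 2 * (w x * H' x)) :=
          mul_le_mul_of_nonneg_left h1 h2
        _ = κ ^ 2 / Z y * q x := by rw [hqdef]; ring
    calc (∫⁻ x, ENNReal.ofReal (p x / Z y) * ENNReal.ofReal (sq x))
        ≤ ∫⁻ x, ENNReal.ofReal ((κ ^ 2 / Z y) * q x) := lintegral_mono hpt
      _ = ∫⁻ x, ENNReal.ofReal (κ ^ 2 / Z y) * ENNReal.ofReal (q x) :=
          lintegral_congr fun x => ENNReal.ofReal_mul (div_nonneg (sq_nonneg κ) hZpos.le)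
      _ = ENNReal.ofReal (κ ^ 2 / Z y) * ∫⁻ x, ENNReal.ofReal (q x) :=
          lintegral_const_mul _ hqc.measurable.ennreal_ofReal
      _ ≤ ENNReal.ofReal (κ ^ 2 / Z y) * ENNReal.ofReal (Z y) := mul_le_mul_right hofq _
      _ = ENNReal.ofReal (κ ^ 2 / Z y * Z y) :=
          (ENNReal.ofReal_mul (div_nonneg (sq_nonneg κ) hZpos.le)).symm
      _ = ENNReal.ofReal (κ ^ 2) := by rw [div_mul_cancel₀ _ hZpos.ne']
  have hintsq : Integrable sq (μ y) := by
    refine ⟨hsqc.aestronglyMeasurable, ?_⟩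
    rw [hasFiniteIntegral_iff_ofReal (Filter.Eventually.of_forall fun x => sq_nonneg _)]
    exact lt_of_le_of_lt hlint ENNReal.ofReal_lt_top
  refine ⟨a, hintsq, ?_⟩
  rw [integral_eq_lintegral_of_nonneg_ae (Filter.Eventually.of_forall fun x => sq_nonneg _)
    hsqc.aestronglyMeasurable]
  calc (∫⁻ x, ENNReal.ofReal (sq x) ∂(μ y)).toReal
      ≤ (ENNReal.ofReal (κ ^ 2)).toReal := ENNReal.toReal_mono ENNReal.ofReal_ne_top hlint
    _ = κ ^ 2 := ENNReal.toReal_ofReal (sq_nonneg κ)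

private lemma cov_sq_le {ν : Measure ℝ} [IsProbabilityMeasure ν] {u v : ℝ → ℝ}
    (hu : Integrable u ν) (hv : Integrable v ν)
    (hu2 : Integrable (fun x => u x ^ 2) ν) (hv2 : Integrable (fun x => v x ^ 2) ν)
    (huv : Integrable (fun x => u x * v x) ν) :
    (∫ x, u x * v x ∂ν - (∫ x, u x ∂ν) * ∫ x, v x ∂ν) ^ 2
      ≤ (∫ x, u x ^ 2 ∂ν) * ∫ x, v x ^ 2 ∂ν := by
  set m := ∫ x, u x ∂ν with hm
  set n := ∫ x, v x ∂ν with hn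
  have hconst : ∀ c : ℝ, ∫ _ : ℝ, c ∂ν = c := fun c => by
    simp [integral_const, measure_univ]
  have hueq : (fun x => (u x - m) ^ 2) = fun x => u x ^ 2 - 2 * m * u x + m ^ 2 :=
    funext fun x => by ring
  have hveq : (fun x => (v x - n) ^ 2) = fun x => v x ^ 2 - 2 * n * v x + n ^ 2 :=
    funext fun x => by ring
  have huveq : (fun x => (u x - m) * (v x - n))
      = fun x => u x * v x - n * u x - m * v x + m * n := funext fun x => by ring
  have hubar2 : Integrable (fun x => (u x - m) ^ 2) ν := by
    rw [hueq]
    exact (hu2.sub ((hu.const_mul (2 * m)))).add (integrable_const _)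
  have hvbar2 : Integrable (fun x => (v x - n) ^ 2) ν := by
    rw [hveq]
    exact (hv2.sub ((hv.const_mul (2 * n)))).add (integrable_const _)
  have huvbar : Integrable (fun x => (u x - m) * (v x - n)) ν := by
    rw [huveq]
    exact (((huv.sub (hu.const_mul n))).sub (hv.const_mul m)).add (integrable_const _)
  have hcs := cs_integral hubar2 hvbar2 huvbar
  have e1 : Integrable (fun z => u z * v z - n * u z) ν := huv.sub (hu.const_mul n)
  have e2 : Integrable (fun z => u z * v z - n * u z - m * v z) ν := e1.sub (hv.const_mul m)
  have h1 : ∫ x, (u x - m) * (v x - n) ∂ν = ∫ x, u x * v x ∂ν - m * n := by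
    rw [huveq, integral_add e2 (integrable_const _), integral_sub e1 (hv.const_mul m),
      integral_sub huv (hu.const_mul n), integral_const_mul, integral_const_mul, hconst]
    rw [← hm, ← hn]; ring
  have h2 : ∫ x, (u x - m) ^ 2 ∂ν = (∫ x, u x ^ 2 ∂ν) - m ^ 2 := by
    have e3 : Integrable (fun z => u z ^ 2 - 2 * m * u z) ν := hu2.sub (hu.const_mul (2 * m))
    rw [hueq, integral_add e3 (integrable_const _),
      integral_sub hu2 (hu.const_mul (2 * m)), integral_const_mul, hconst, ← hm]; ring
  have h3 : ∫ x, (v x - n) ^ 2 ∂ν = (∫ x, v x ^ 2 ∂ν) - n ^ 2 := by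
    have e4 : Integrable (fun z => v z ^ 2 - 2 * n * v z) ν := hv2.sub (hv.const_mul (2 * n))
    rw [hveq, integral_add e4 (integrable_const _),
      integral_sub hv2 (hv.const_mul (2 * n)), integral_const_mul, hconst, ← hn]; ring
  rw [h1, h2, h3] at hcs
  have hub0 : 0 ≤ (∫ x, u x ^ 2 ∂ν) - m ^ 2 := by
    rw [← h2]; exact integral_nonneg fun x => sq_nonneg _
  have hvb0 : 0 ≤ (∫ x, v x ^ 2 ∂ν) - n ^ 2 := by
    rw [← h3]; exact integral_nonneg fun x => sq_nonneg _
  nlinarith [sq_nonneg m, sq_nonneg n]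

private lemma transfer_integral
    (F G : ℝ → ℝ) (hFc : Continuous F) (hGc : Continuous G)
    (Z : ℝ → ℝ) (μ : ℝ → Measure ℝ)
    (hμ : ∀ y, μ y = (volume : Measure ℝ).withDensity
      (fun x => ENNReal.ofReal (Real.exp (-F x - G (x - y)) / Z y)))
    (hprob : ∀ y, IsProbabilityMeasure (μ y)) (y : ℝ) (g : ℝ → ℝ) :
    (Integrable g (μ y) ↔
      Integrable (fun x => g x * (Real.exp (-F x - G (x - y)) / Z y)) volume) ∧
    (∫ x, g x ∂(μ y) = (Z y)⁻¹ * ∫ x, Real.exp (-F x - G (x - y)) * g x) := by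
  obtain ⟨hZpos, -, -, -⟩ := measure_facts F G hFc hGc Z μ hμ hprob y
  set p : ℝ → ℝ := fun x => Real.exp (-F x - G (x - y)) with hpdef
  have hpc : Continuous p := Real.continuous_exp.comp
    ((hFc.neg).sub (hGc.comp (continuous_id.sub continuous_const)))
  have hd : Measurable fun x => ENNReal.ofReal (p x / Z y) :=
    (hpc.div_const _).measurable.ennreal_ofReal
  constructor
  · rw [hμ y, integrable_withDensity_iff hd
      (Filter.Eventually.of_forall fun x => ENNReal.ofReal_lt_top)]
    rw [show (fun x => g x * (ENNReal.ofReal (p x / Z y)).toReal)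
        = fun x => g x * (p x / Z y) from funext fun x => by
      rw [ENNReal.toReal_ofReal (div_nonneg (Real.exp_pos _).le hZpos.le)]]
  · rw [hμ y]
    rw [show (fun x => ENNReal.ofReal (p x / Z y))
        = (fun x => ((p x / Z y).toNNReal : ℝ≥0∞)) from rfl]
    rw [integral_withDensity_eq_integral_smul (hpc.div_const _).measurable.real_toNNReal g]
    rw [show (fun x => (p x / Z y).toNNReal • g x) = fun x => (Z y)⁻¹ * (p x * g x) from
      funext fun x => by
        rw [NNReal.smul_def, Real.coe_toNNReal _ (div_nonneg (Real.exp_pos _).le hZpos.le),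
          smul_eq_mul]
        ring]
    rw [integral_const_mul]

private lemma integrable_mul_p
    (F G : ℝ → ℝ) (ε : ℝ) (hε : 0 < ε) (hF : ContDiff ℝ 2 F) (hG : ContDiff ℝ 2 G)
    (hF'' : ∀ x, ε ≤ deriv (deriv F) x) (hGconv : ∀ x, 0 ≤ deriv (deriv G) x)
    (Z : ℝ → ℝ) (μ : ℝ → Measure ℝ)
    (hμ : ∀ y, μ y = (volume : Measure ℝ).withDensity
      (fun x => ENNReal.ofReal (Real.exp (-F x - G (x - y)) / Z y)))
    (hprob : ∀ y, IsProbabilityMeasure (μ y))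
    (y : ℝ) (φ ψ : ℝ → ℝ) (hφ : ContDiff ℝ 1 φ) (hψ : ContDiff ℝ 1 ψ)
    (κ κ' : ℝ)
    (hκ : ∀ x, |deriv φ x| ≤ κ * Real.sqrt (deriv (deriv F) x))
    (hκ' : ∀ x, |deriv ψ x| ≤ κ' * Real.sqrt (deriv (deriv F) x)) :
    Integrable (fun x => φ x * ψ x) (μ y) ∧
      Integrable (fun x => φ x * ψ x * Real.exp (-F x - G (x - y))) volume := by
  haveI := hprob y
  obtain ⟨a, ha2, -⟩ := core_bound F G ε hε hF hG hF'' hGconv Z μ hμ hprob y φ hφ κ hκ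
  obtain ⟨b, hb2, -⟩ := core_bound F G ε hε hF hG hF'' hGconv Z μ hμ hprob y ψ hψ κ' hκ'
  obtain ⟨hZpos, -, -, -⟩ := measure_facts F G hF.continuous hG.continuous Z μ hμ hprob y
  have hdom : ∀ x, |φ x * ψ x| ≤ (1 + φ a ^ 2 + ψ b ^ 2) * (1 + (φ x - φ a) ^ 2 + (ψ x - ψ b) ^ 2) := by
    intro x
    have h1 : |φ x * ψ x| ≤ (φ x ^ 2 + ψ x ^ 2) / 2 := by
      rw [abs_mul]
      nlinarith [sq_nonneg (|φ x| - |ψ x|), sq_abs (φ x), sq_abs (ψ x),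
        abs_nonneg (φ x), abs_nonneg (ψ x)]
    nlinarith [sq_nonneg (φ x - φ a - φ a), sq_nonneg (ψ x - ψ b - ψ b),
      sq_nonneg (φ x - φ a), sq_nonneg (ψ x - ψ b), sq_nonneg (φ a), sq_nonneg (ψ b),
      mul_nonneg (add_nonneg (sq_nonneg (φ a)) (sq_nonneg (ψ b)))
        (add_nonneg (sq_nonneg (φ x - φ a)) (sq_nonneg (ψ x - ψ b)))]
  have hRHSint : Integrable (fun x =>
      (1 + φ a ^ 2 + ψ b ^ 2) * (1 + (φ x - φ a) ^ 2 + (ψ x - ψ b) ^ 2)) (μ y) := by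
    apply Integrable.const_mul
    exact ((integrable_const 1).add ha2).add hb2
  have hmeas : AEStronglyMeasurable (fun x => φ x * ψ x) (μ y) :=
    (hφ.continuous.mul hψ.continuous).aestronglyMeasurable
  have hint1 : Integrable (fun x => φ x * ψ x) (μ y) := by
    apply Integrable.mono hRHSint hmeas
    apply Filter.Eventually.of_forall
    intro x
    rw [Real.norm_eq_abs, Real.norm_eq_abs]
    exact (hdom x).trans (le_abs_self _)
  refine ⟨hint1, ?_⟩
  have htr := (transfer_integral F G hF.continuous hG.continuous Z μ hμ hprob y
    (fun x => φ x * ψ x)).1.mp hint1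
  have := htr.const_mul (Z y)
  apply this.congr
  apply Filter.Eventually.of_forall
  intro x
  field_simp

private lemma hasDeriv_weighted
    (F G : ℝ → ℝ) (ε : ℝ) (hε : 0 < ε) (hF : ContDiff ℝ 2 F) (hG : ContDiff ℝ 2 G)
    (hF'' : ∀ x, ε ≤ deriv (deriv F) x) (hGconv : ∀ x, 0 ≤ deriv (deriv G) x)
    (Z : ℝ → ℝ) (μ : ℝ → Measure ℝ)
    (hμ : ∀ y, μ y = (volume : Measure ℝ).withDensity
      (fun x => ENNReal.ofReal (Real.exp (-F x - G (x - y)) / Z y)))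
    (hprob : ∀ y, IsProbabilityMeasure (μ y))
    (Cst : ℝ)
    (hC : ∀ x y, |deriv (deriv G) (x - y)|
      ≤ Cst * Real.sqrt (deriv (deriv F) x) * Real.sqrt (deriv (deriv F) y))
    (y₀ : ℝ) (φ : ℝ → ℝ) (hφ : ContDiff ℝ 1 φ) (κ : ℝ)
    (hκ : ∀ x, |deriv φ x| ≤ κ * Real.sqrt (deriv (deriv F) x)) :
    HasDerivAt (fun y => ∫ x, φ x * Real.exp (-F x - G (x - y)))
      (∫ x, φ x * deriv G (x - y₀) * Real.exp (-F x - G (x - y₀))) y₀ := by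
  have hG1 : ContDiff ℝ 1 (deriv G) := by
    have h : ContDiff ℝ (1 + 1 : ℕ) G := by exact_mod_cast hG
    exact (contDiff_succ_iff_deriv.mp (by exact_mod_cast h)).2.2
  have hGd : ∀ v : ℝ, HasDerivAt G (deriv G v) v :=
    fun v => ((hG.differentiable (by norm_num)) v).hasDerivAt
  have hG'c : Continuous (deriv G) := hG1.continuous
  have hG'mono : Monotone (deriv G) :=
    monotone_of_deriv_nonneg (hG1.differentiable one_ne_zero) hGconv
  have hGincr : ∀ c d : ℝ, c ≤ d → 0 ≤ deriv G c → G c ≤ G d := by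
    intro c d hcd h0
    have hfc : ∫ t in c..d, deriv G t = G d - G c :=
      intervalIntegral.integral_eq_sub_of_hasDerivAt (fun t _ => hGd t)
        (hG'c.intervalIntegrable c d)
    have h1 : 0 ≤ ∫ t in c..d, deriv G t :=
      intervalIntegral.integral_nonneg hcd fun t ht => le_trans h0 (hG'mono ht.1)
    linarith
  have hGdecr : ∀ c d : ℝ, c ≤ d → deriv G d ≤ 0 → G d ≤ G c := by
    intro c d hcd h0
    have hfc : ∫ t in c..d, deriv G t = G d - G c :=
      intervalIntegral.integral_eq_sub_of_hasDerivAt (fun t _ => hGd t)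
        (hG'c.intervalIntegrable c d)
    have h1 : 0 ≤ ∫ t in c..d, -deriv G t :=
      intervalIntegral.integral_nonneg hcd fun t ht => by
        have := hG'mono ht.2; linarith
    rw [intervalIntegral.integral_neg] at h1
    linarith
  -- shifted derivative functions
  set ψm : ℝ → ℝ := fun x => deriv G (x - (y₀ + 1)) with hψmdef
  set ψp : ℝ → ℝ := fun x => deriv G (x - (y₀ - 1)) with hψpdef
  have hψmC : ContDiff ℝ 1 ψm := hG1.comp (contDiff_id.sub contDiff_const)
  have hψpC : ContDiff ℝ 1 ψp := hG1.comp (contDiff_id.sub contDiff_const)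
  have hψmd : ∀ x, deriv ψm x = deriv (deriv G) (x - (y₀ + 1)) := by
    intro x
    have : HasDerivAt ψm (deriv (deriv G) (x - (y₀ + 1))) x := by
      simpa [Function.comp_def] using ((hG1.differentiable one_ne_zero) (x - (y₀ + 1))).hasDerivAt.comp x
        ((hasDerivAt_id x).sub_const (y₀ + 1))
    exact this.deriv
  have hψpd : ∀ x, deriv ψp x = deriv (deriv G) (x - (y₀ - 1)) := by
    intro x
    have : HasDerivAt ψp (deriv (deriv G) (x - (y₀ - 1))) x := by
      simpa [Function.comp_def] using ((hG1.differentiable one_ne_zero) (x - (y₀ - 1))).hasDerivAt.comp x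
        ((hasDerivAt_id x).sub_const (y₀ - 1))
    exact this.deriv
  have hψmb : ∀ x, |deriv ψm x| ≤ (Cst * Real.sqrt (deriv (deriv F) (y₀ + 1)))
      * Real.sqrt (deriv (deriv F) x) := by
    intro x
    rw [hψmd x]
    calc |deriv (deriv G) (x - (y₀ + 1))|
        ≤ Cst * Real.sqrt (deriv (deriv F) x) * Real.sqrt (deriv (deriv F) (y₀ + 1)) :=
          hC x (y₀ + 1)
      _ = Cst * Real.sqrt (deriv (deriv F) (y₀ + 1)) * Real.sqrt (deriv (deriv F) x) := by ring
  have hψpb : ∀ x, |deriv ψp x| ≤ (Cst * Real.sqrt (deriv (deriv F) (y₀ - 1)))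
      * Real.sqrt (deriv (deriv F) x) := by
    intro x
    rw [hψpd x]
    calc |deriv (deriv G) (x - (y₀ - 1))|
        ≤ Cst * Real.sqrt (deriv (deriv F) x) * Real.sqrt (deriv (deriv F) (y₀ - 1)) :=
          hC x (y₀ - 1)
      _ = Cst * Real.sqrt (deriv (deriv F) (y₀ - 1)) * Real.sqrt (deriv (deriv F) x) := by ring
  -- integrable pieces
  have hone : ∀ x, |deriv (fun _ : ℝ => (1:ℝ)) x| ≤ 0 * Real.sqrt (deriv (deriv F) x) := by
    intro x; simp
  have I0 : Integrable (fun x => φ x * Real.exp (-F x - G (x - y₀))) volume := by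
    have h := (integrable_mul_p F G ε hε hF hG hF'' hGconv Z μ hμ hprob y₀ φ (fun _ => 1)
      hφ contDiff_const κ 0 hκ hone).2
    apply h.congr
    apply Filter.Eventually.of_forall
    intro x; simp
  have I1 := (integrable_mul_p F G ε hε hF hG hF'' hGconv Z μ hμ hprob (y₀ + 1) φ ψm
    hφ hψmC κ _ hκ hψmb).2
  have I2 := (integrable_mul_p F G ε hε hF hG hF'' hGconv Z μ hμ hprob (y₀ + 1) φ ψp
    hφ hψpC κ _ hκ hψpb).2
  have I3 := (integrable_mul_p F G ε hε hF hG hF'' hGconv Z μ hμ hprob (y₀ - 1) φ ψm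
    hφ hψmC κ _ hκ hψmb).2
  have I4 := (integrable_mul_p F G ε hε hF hG hF'' hGconv Z μ hμ hprob (y₀ - 1) φ ψp
    hφ hψpC κ _ hκ hψpb).2
  set β : ℝ → ℝ := fun x => |ψm x| + |ψp x| with hβdef
  set pm : ℝ → ℝ := fun x => Real.exp (-F x - G (x - (y₀ + 1))) with hpmdef
  set pp : ℝ → ℝ := fun x => Real.exp (-F x - G (x - (y₀ - 1))) with hppdef
  have hmain_int : Integrable (fun x => |φ x| * β x * (pm x + pp x)) volume := by
    have heq : (fun x => |φ x| * β x * (pm x + pp x))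
        = fun x => (|φ x * ψm x * pm x| + |φ x * ψp x * pm x|)
            + (|φ x * ψm x * pp x| + |φ x * ψp x * pp x|) := by
      funext x
      rw [hβdef]
      simp only [abs_mul, abs_of_pos (Real.exp_pos _), hpmdef, hppdef]
      ring
    rw [heq]
    exact (I1.abs.add I2.abs).add (I3.abs.add I4.abs)
  -- pointwise |G'(x-y)| ≤ β x  for y in the ball
  have hβb : ∀ (x : ℝ) (y : ℝ), y ∈ ball y₀ 1 → |deriv G (x - y)| ≤ β x := by
    intro x y hy
    have hy' : |y - y₀| < 1 := by
      rw [mem_ball, Real.dist_eq] at hy; exact hy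
    have h1 : x - (y₀ + 1) ≤ x - y := by
      have := abs_lt.mp hy'; linarith [this.2]
    have h2 : x - y ≤ x - (y₀ - 1) := by
      have := abs_lt.mp hy'; linarith [this.1]
    have hlo := hG'mono h1
    have hhi := hG'mono h2
    rw [hβdef]
    rcases abs_cases (deriv G (x - y)) with ⟨heq, -⟩ | ⟨heq, -⟩ <;> rw [heq]
    · calc deriv G (x - y) ≤ deriv G (x - (y₀ - 1)) := hhi
        _ ≤ |ψp x| := le_abs_self _
        _ ≤ |ψm x| + |ψp x| := le_add_of_nonneg_left (abs_nonneg _)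
    · calc -deriv G (x - y) ≤ -deriv G (x - (y₀ + 1)) := by linarith
        _ ≤ |ψm x| := neg_le_abs _
        _ ≤ |ψm x| + |ψp x| := le_add_of_nonneg_right (abs_nonneg _)
  -- generic application of the dominated-derivative theorem
  have apply_dom : ∀ bound : ℝ → ℝ, Integrable bound volume →
      (∀ (x : ℝ) (y : ℝ), y ∈ ball y₀ 1 →
        |φ x * deriv G (x - y) * Real.exp (-F x - G (x - y))| ≤ bound x) →
      HasDerivAt (fun y => ∫ x, φ x * Real.exp (-F x - G (x - y)))
        (∫ x, φ x * deriv G (x - y₀) * Real.exp (-F x - G (x - y₀))) y₀ := by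
    intro bound hbint hbd
    have hcont : ∀ y : ℝ, Continuous fun x => φ x * Real.exp (-F x - G (x - y)) := by
      intro y
      exact hφ.continuous.mul (Real.continuous_exp.comp
        ((hF.continuous.neg).sub (hG.continuous.comp (continuous_id.sub continuous_const))))
    have h := hasDerivAt_integral_of_dominated_loc_of_deriv_le (μ := volume)
      (F := fun y x => φ x * Real.exp (-F x - G (x - y)))
      (F' := fun y x => φ x * deriv G (x - y) * Real.exp (-F x - G (x - y)))
      (x₀ := y₀) (bound := bound) (s := ball y₀ 1) (ball_mem_nhds y₀ one_pos)
      (Filter.Eventually.of_forall fun y => (hcont y).aestronglyMeasurable)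
      I0
      ((by
        have c1 := hφ.continuous; have c2 := hG'c
        have c3 := hF.continuous; have c4 := hG.continuous
        fun_prop :
          Continuous fun x => φ x * deriv G (x - y₀) * Real.exp (-F x - G (x - y₀))).aestronglyMeasurable)
      (Filter.Eventually.of_forall fun x y hy => by
        rw [Real.norm_eq_abs]; exact hbd x y hy)
      hbint
      (Filter.Eventually.of_forall fun x y hy => by
        have h0 : HasDerivAt (fun y : ℝ => x - y) (-1) y := by
          simpa using (hasDerivAt_id y).const_sub x
        have h1 : HasDerivAt (fun y => G (x - y)) (deriv G (x - y) * (-1)) y :=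
          (hGd (x - y)).comp y h0
        have h2 : HasDerivAt (fun y => -F x - G (x - y)) (deriv G (x - y)) y := by
          have h2' := h1.const_sub (-F x)
          exact h2'.congr_deriv (by ring)
        have h3 := h2.exp
        have h4 := h3.const_mul (φ x)
        exact h4.congr_deriv (by ring))
    exact h.2
  -- case analysis
  by_cases hneg : ∃ v, deriv G v < 0
  · by_cases hpos : ∃ u, 0 < deriv G u
    · -- G has an interior global minimum
      obtain ⟨v, hv⟩ := hneg
      obtain ⟨u, hu⟩ := hpos
      have hvu : v < u := by
        by_contra hcon
        push_neg at hcon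
        have := hG'mono hcon
        linarith
      obtain ⟨vs, -, hvs⟩ := intermediate_value_Icc hvu.le hG'c.continuousOn ⟨hv.le, hu.le⟩
      have hmin : ∀ t, G vs ≤ G t := by
        intro t
        rcases le_total vs t with h | h
        · exact hGincr vs t h (le_of_eq hvs.symm)
        · exact hGdecr t vs h (le_of_eq hvs)
      set J : Set ℝ := Icc (vs + y₀ - 1) (vs + y₀ + 1) with hJdef
      set bound : ℝ → ℝ := fun x => |φ x| * β x * (pm x + pp x)
        + J.indicator (fun x => |φ x| * β x * Real.exp (-F x - G vs)) x with hbdef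
      have hbint : Integrable bound volume := by
        apply hmain_int.add
        apply IntegrableOn.integrable_indicator _ measurableSet_Icc
        exact ((hφ.continuous.abs.mul ((hG'c.comp (continuous_id.sub continuous_const)).abs.add
          (hG'c.comp (continuous_id.sub continuous_const)).abs)).mul
          (Real.continuous_exp.comp ((hF.continuous.neg).sub continuous_const))).integrableOn_Icc
      apply apply_dom bound hbint
      intro x y hy
      have hb1 : |φ x * deriv G (x - y) * Real.exp (-F x - G (x - y))|
          = |φ x| * |deriv G (x - y)| * Real.exp (-F x - G (x - y)) := by
        rw [abs_mul, abs_mul, abs_of_pos (Real.exp_pos _)]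
      rw [hb1]
      have hββ := hβb x y hy
      have hβ0 : 0 ≤ β x := add_nonneg (abs_nonneg _) (abs_nonneg _)
      have hstep : |φ x| * |deriv G (x - y)| * Real.exp (-F x - G (x - y))
          ≤ |φ x| * β x * Real.exp (-F x - G (x - y)) := by
        apply mul_le_mul_of_nonneg_right _ (Real.exp_pos _).le
        exact mul_le_mul_of_nonneg_left hββ (abs_nonneg _)
      have hy' : |y - y₀| < 1 := by rw [mem_ball, Real.dist_eq] at hy; exact hy
      have hylt := abs_lt.mp hy'
      by_cases hsm : 0 ≤ ψm x
      · -- increasing from the left edge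
        have hGle : G (x - (y₀ + 1)) ≤ G (x - y) :=
          hGincr (x - (y₀ + 1)) (x - y) (by linarith [hylt.2]) hsm
        have hexp : Real.exp (-F x - G (x - y)) ≤ pm x := by
          rw [hpmdef]
          apply Real.exp_le_exp.2
          linarith
        have : |φ x| * β x * Real.exp (-F x - G (x - y)) ≤ |φ x| * β x * (pm x + pp x) := by
          apply mul_le_mul_of_nonneg_left _ (mul_nonneg (abs_nonneg _) hβ0)
          calc Real.exp (-F x - G (x - y)) ≤ pm x := hexp
            _ ≤ pm x + pp x := le_add_of_nonneg_right (Real.exp_pos _).le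
        simp only [hbdef]
        have hind : 0 ≤ J.indicator (fun x => |φ x| * β x * Real.exp (-F x - G vs)) x :=
          Set.indicator_nonneg (fun z _ => mul_nonneg (mul_nonneg (abs_nonneg _)
            (add_nonneg (abs_nonneg _) (abs_nonneg _))) (Real.exp_pos _).le) x
        linarith [hstep]
      · by_cases hsp : ψp x ≤ 0
        · have hGle : G (x - (y₀ - 1)) ≤ G (x - y) :=
            hGdecr (x - y) (x - (y₀ - 1)) (by linarith [hylt.1]) hsp
          have hexp : Real.exp (-F x - G (x - y)) ≤ pp x := by
            rw [hppdef]
            apply Real.exp_le_exp.2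
            linarith
          have : |φ x| * β x * Real.exp (-F x - G (x - y)) ≤ |φ x| * β x * (pm x + pp x) := by
            apply mul_le_mul_of_nonneg_left _ (mul_nonneg (abs_nonneg _) hβ0)
            calc Real.exp (-F x - G (x - y)) ≤ pp x := hexp
              _ ≤ pm x + pp x := le_add_of_nonneg_left (Real.exp_pos _).le
          simp only [hbdef]
          have hind : 0 ≤ J.indicator (fun x => |φ x| * β x * Real.exp (-F x - G vs)) x :=
            Set.indicator_nonneg (fun z _ => mul_nonneg (mul_nonneg (abs_nonneg _)
              (add_nonneg (abs_nonneg _) (abs_nonneg _))) (Real.exp_pos _).le) x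
          linarith [hstep]
        · -- x is in the compact window J
          push_neg at hsm hsp
          have hxJ : x ∈ J := by
            rw [hJdef]
            constructor
            · have : vs < x - (y₀ - 1) := by
                by_contra hcon
                push_neg at hcon
                have := hG'mono hcon
                rw [hvs] at this
                rw [hψpdef] at hsp
                linarith
              linarith
            · have : x - (y₀ + 1) < vs := by
                by_contra hcon
                push_neg at hcon
                have := hG'mono hcon
                rw [hvs] at this
                rw [hψmdef] at hsm
                linarith
              linarith
          have hexp : Real.exp (-F x - G (x - y)) ≤ Real.exp (-F x - G vs) := by
            apply Real.exp_le_exp.2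
            linarith [hmin (x - y)]
          simp only [hbdef]
          rw [Set.indicator_of_mem hxJ]
          have h5 : |φ x| * β x * Real.exp (-F x - G (x - y))
              ≤ |φ x| * β x * Real.exp (-F x - G vs) :=
            mul_le_mul_of_nonneg_left hexp (mul_nonneg (abs_nonneg _) hβ0)
          have h6 : 0 ≤ |φ x| * β x * (pm x + pp x) :=
            mul_nonneg (mul_nonneg (abs_nonneg _) hβ0)
              (add_nonneg (Real.exp_pos _).le (Real.exp_pos _).le)
          linarith [hstep]
    · -- deriv G ≤ 0 everywhere
      push_neg at hpos
      apply apply_dom (fun x => |φ x| * β x * (pm x + pp x)) hmain_int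
      intro x y hy
      have hy' : |y - y₀| < 1 := by rw [mem_ball, Real.dist_eq] at hy; exact hy
      have hylt := abs_lt.mp hy'
      have hb1 : |φ x * deriv G (x - y) * Real.exp (-F x - G (x - y))|
          = |φ x| * |deriv G (x - y)| * Real.exp (-F x - G (x - y)) := by
        rw [abs_mul, abs_mul, abs_of_pos (Real.exp_pos _)]
      rw [hb1]
      have hββ := hβb x y hy
      have hβ0 : 0 ≤ β x := add_nonneg (abs_nonneg _) (abs_nonneg _)
      have hGle : G (x - (y₀ - 1)) ≤ G (x - y) :=
        hGdecr (x - y) (x - (y₀ - 1)) (by linarith [hylt.1]) (hpos _)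
      have hexp : Real.exp (-F x - G (x - y)) ≤ pp x := by
        rw [hppdef]; apply Real.exp_le_exp.2; linarith
      calc |φ x| * |deriv G (x - y)| * Real.exp (-F x - G (x - y))
          ≤ |φ x| * β x * Real.exp (-F x - G (x - y)) := by
            apply mul_le_mul_of_nonneg_right _ (Real.exp_pos _).le
            exact mul_le_mul_of_nonneg_left hββ (abs_nonneg _)
        _ ≤ |φ x| * β x * (pm x + pp x) := by
            apply mul_le_mul_of_nonneg_left _ (mul_nonneg (abs_nonneg _) hβ0)
            calc Real.exp (-F x - G (x - y)) ≤ pp x := hexp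
              _ ≤ pm x + pp x := le_add_of_nonneg_left (Real.exp_pos _).le
  · -- deriv G ≥ 0 everywhere
    push_neg at hneg
    apply apply_dom (fun x => |φ x| * β x * (pm x + pp x)) hmain_int
    intro x y hy
    have hy' : |y - y₀| < 1 := by rw [mem_ball, Real.dist_eq] at hy; exact hy
    have hylt := abs_lt.mp hy'
    have hb1 : |φ x * deriv G (x - y) * Real.exp (-F x - G (x - y))|
        = |φ x| * |deriv G (x - y)| * Real.exp (-F x - G (x - y)) := by
      rw [abs_mul, abs_mul, abs_of_pos (Real.exp_pos _)]
    rw [hb1]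
    have hββ := hβb x y hy
    have hβ0 : 0 ≤ β x := add_nonneg (abs_nonneg _) (abs_nonneg _)
    have hGle : G (x - (y₀ + 1)) ≤ G (x - y) :=
      hGincr (x - (y₀ + 1)) (x - y) (by linarith [hylt.2]) (hneg _)
    have hexp : Real.exp (-F x - G (x - y)) ≤ pm x := by
      rw [hpmdef]; apply Real.exp_le_exp.2; linarith
    calc |φ x| * |deriv G (x - y)| * Real.exp (-F x - G (x - y))
        ≤ |φ x| * β x * Real.exp (-F x - G (x - y)) := by
          apply mul_le_mul_of_nonneg_right _ (Real.exp_pos _).le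
          exact mul_le_mul_of_nonneg_left hββ (abs_nonneg _)
      _ ≤ |φ x| * β x * (pm x + pp x) := by
          apply mul_le_mul_of_nonneg_left _ (mul_nonneg (abs_nonneg _) hβ0)
          calc Real.exp (-F x - G (x - y)) ≤ pm x := hexp
            _ ≤ pm x + pp x := le_add_of_nonneg_right (Real.exp_pos _).le


/-- The key one-point (Dobrushin coefficient) estimate: for the conditional
measures `dμ_y ∝ exp(-F(x) - G(x-y)) dx` with `F'' ≥ ε > 0` and `G` convex,
and `f` with `δ(f) = sup |f'/√F''| ≤ δ`,
`C = sup_{x,y} |G''(x-y)|/(√F''(x)√F''(y))`, the map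
`y ↦ ∫ f dμ_y` is differentiable with
`|d/dy ∫ f dμ_y| ≤ C δ √(F''(y))`. -/
theorem one_point_dobrushin_estimate
    (F G : ℝ → ℝ) (ε : ℝ) (hε : 0 < ε)
    (hF : ContDiff ℝ 2 F) (hG : ContDiff ℝ 2 G)
    (hF'' : ∀ x, ε ≤ deriv (deriv F) x)
    (hGconv : ∀ x, 0 ≤ deriv (deriv G) x)
    (Z : ℝ → ℝ) (hZ : ∀ y, Z y = ∫ x, Real.exp (-F x - G (x - y)))
    (μ : ℝ → Measure ℝ)
    (hμ : ∀ y, μ y = (volume : Measure ℝ).withDensity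
      (fun x => ENNReal.ofReal (Real.exp (-F x - G (x - y)) / Z y)))
    (hprob : ∀ y, IsProbabilityMeasure (μ y))
    (Cst : ℝ)
    (hC : ∀ x y, |deriv (deriv G) (x - y)|
      ≤ Cst * Real.sqrt (deriv (deriv F) x) * Real.sqrt (deriv (deriv F) y))
    (f : ℝ → ℝ) (hf : ContDiff ℝ 1 f)
    (δ : ℝ) (hδ : ∀ x, |deriv f x| ≤ δ * Real.sqrt (deriv (deriv F) x)) :
    ∃ d : ℝ → ℝ,
      (∀ y, HasDerivAt (fun y' => ∫ x, f x ∂(μ y')) (d y) y) ∧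
      (∀ y, |d y| ≤ Cst * δ * Real.sqrt (deriv (deriv F) y)) := by
  classical
  have hG1 : ContDiff ℝ 1 (deriv G) := by
    have h : ContDiff ℝ (1 + 1 : ℕ) G := by exact_mod_cast hG
    exact (contDiff_succ_iff_deriv.mp (by exact_mod_cast h)).2.2
  have hF''pos : ∀ t, 0 < deriv (deriv F) t := fun t => lt_of_lt_of_le hε (hF'' t)
  have hone : ∀ x, |deriv (fun _ : ℝ => (1:ℝ)) x| ≤ 0 * Real.sqrt (deriv (deriv F) x) := by
    intro x; simp
  -- the conditional expectation of the shifted derivative of G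
  have hgyC : ∀ y : ℝ, ContDiff ℝ 1 (fun x => deriv G (x - y)) :=
    fun y => hG1.comp (contDiff_id.sub contDiff_const)
  have hgyb : ∀ y x : ℝ, |deriv (fun x => deriv G (x - y)) x|
      ≤ (Cst * Real.sqrt (deriv (deriv F) y)) * Real.sqrt (deriv (deriv F) x) := by
    intro y x
    have hder : HasDerivAt (fun x => deriv G (x - y)) (deriv (deriv G) (x - y)) x := by
      simpa [Function.comp_def] using ((hG1.differentiable one_ne_zero) (x - y)).hasDerivAt.comp x
        ((hasDerivAt_id x).sub_const y)
    rw [hder.deriv]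
    calc |deriv (deriv G) (x - y)|
        ≤ Cst * Real.sqrt (deriv (deriv F) x) * Real.sqrt (deriv (deriv F) y) := hC x y
      _ = Cst * Real.sqrt (deriv (deriv F) y) * Real.sqrt (deriv (deriv F) x) := by ring
  set d : ℝ → ℝ := fun y => (∫ x, f x * deriv G (x - y) ∂(μ y))
      - (∫ x, f x ∂(μ y)) * (∫ x, deriv G (x - y) ∂(μ y)) with hddef
  refine ⟨d, ?_, ?_⟩
  · -- differentiability
    intro y
    haveI := hprob y
    obtain ⟨hZpos, hpint, -, hpZ⟩ :=
      measure_facts F G hF.continuous hG.continuous Z μ hμ hprob y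
    have hN := hasDeriv_weighted F G ε hε hF hG hF'' hGconv Z μ hμ hprob Cst hC y f hf δ hδ
    have hZd0 := hasDeriv_weighted F G ε hε hF hG hF'' hGconv Z μ hμ hprob Cst hC y
      (fun _ => (1:ℝ)) contDiff_const 0 hone
    have hZfun : (fun y' : ℝ => ∫ x, (1:ℝ) * Real.exp (-F x - G (x - y'))) = Z := by
      funext y'
      rw [hZ y']
      simp
    rw [hZfun] at hZd0
    have hAfun : (fun y' : ℝ => ∫ x, f x ∂(μ y'))
        = fun y' : ℝ => (∫ x, f x * Real.exp (-F x - G (x - y'))) / Z y' := by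
      funext y'
      rw [(transfer_integral F G hF.continuous hG.continuous Z μ hμ hprob y' f).2]
      rw [show (fun x => Real.exp (-F x - G (x - y')) * f x)
          = fun x => f x * Real.exp (-F x - G (x - y')) from funext fun x => mul_comm _ _]
      rw [div_eq_inv_mul]
    rw [hAfun]
    have hdiv := hN.div hZd0 hZpos.ne'
    refine hdiv.congr_deriv ?_
    -- identify d y with the quotient-rule expression
    have e1 : ∫ x, f x * deriv G (x - y) ∂(μ y)
        = (Z y)⁻¹ * ∫ x, f x * deriv G (x - y) * Real.exp (-F x - G (x - y)) := by
      rw [(transfer_integral F G hF.continuous hG.continuous Z μ hμ hprob y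
        (fun x => f x * deriv G (x - y))).2]
      rw [show (fun x => Real.exp (-F x - G (x - y)) * (f x * deriv G (x - y)))
          = fun x => f x * deriv G (x - y) * Real.exp (-F x - G (x - y)) from
        funext fun x => by ring]
    have e2 : ∫ x, f x ∂(μ y)
        = (Z y)⁻¹ * ∫ x, f x * Real.exp (-F x - G (x - y)) := by
      rw [(transfer_integral F G hF.continuous hG.continuous Z μ hμ hprob y f).2]
      rw [show (fun x => Real.exp (-F x - G (x - y)) * f x)
          = fun x => f x * Real.exp (-F x - G (x - y)) from funext fun x => mul_comm _ _]
    have e3 : ∫ x, deriv G (x - y) ∂(μ y)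
        = (Z y)⁻¹ * ∫ x, (1:ℝ) * deriv G (x - y) * Real.exp (-F x - G (x - y)) := by
      rw [(transfer_integral F G hF.continuous hG.continuous Z μ hμ hprob y
        (fun x => deriv G (x - y))).2]
      rw [show (fun x => Real.exp (-F x - G (x - y)) * deriv G (x - y))
          = fun x => (1:ℝ) * deriv G (x - y) * Real.exp (-F x - G (x - y)) from
        funext fun x => by ring]
    rw [hddef]
    simp only [e1, e2, e3]
    field_simp
  · -- the bound
    intro y
    haveI := hprob y
    set gy : ℝ → ℝ := fun x => deriv G (x - y) with hgydef
    set k : ℝ := Cst * Real.sqrt (deriv (deriv F) y) with hkdef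
    have hδ0 : 0 ≤ δ := by
      have h1 := hδ 0
      have h2 : 0 < Real.sqrt (deriv (deriv F) 0) := Real.sqrt_pos.2 (hF''pos 0)
      nlinarith [abs_nonneg (deriv f 0)]
    have hk0 : 0 ≤ k := by
      have h1 := hC y y
      have h2 : 0 < Real.sqrt (deriv (deriv F) y) := Real.sqrt_pos.2 (hF''pos y)
      have h3 : 0 ≤ Cst := by nlinarith [abs_nonneg (deriv (deriv G) (y - y)), mul_pos h2 h2]
      exact mul_nonneg h3 h2.le
    obtain ⟨a, hfa2, hfaI⟩ :=
      core_bound F G ε hε hF hG hF'' hGconv Z μ hμ hprob y f hf δ hδ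
    obtain ⟨b, hgb2, hgbI⟩ :=
      core_bound F G ε hε hF hG hF'' hGconv Z μ hμ hprob y gy (hgyC y) k (hgyb y)
    have Hfg : Integrable (fun x => f x * gy x) (μ y) :=
      (integrable_mul_p F G ε hε hF hG hF'' hGconv Z μ hμ hprob y f gy hf (hgyC y)
        δ k hδ (hgyb y)).1
    have Hf : Integrable f (μ y) := by
      have h := (integrable_mul_p F G ε hε hF hG hF'' hGconv Z μ hμ hprob y f (fun _ => 1)
        hf contDiff_const δ 0 hδ hone).1
      apply h.congr
      apply Filter.Eventually.of_forall
      intro x; simp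
    have Hg : Integrable gy (μ y) := by
      have h := (integrable_mul_p F G ε hε hF hG hF'' hGconv Z μ hμ hprob y gy (fun _ => 1)
        (hgyC y) contDiff_const k 0 (hgyb y) hone).1
      apply h.congr
      apply Filter.Eventually.of_forall
      intro x; simp
    -- centered functions
    have Hu : Integrable (fun x => f x - f a) (μ y) := Hf.sub (integrable_const _)
    have Hv : Integrable (fun x => gy x - gy b) (μ y) := Hg.sub (integrable_const _)
    have Huv : Integrable (fun x => (f x - f a) * (gy x - gy b)) (μ y) := by
      have e1 : Integrable (fun x => f x * gy x - gy b * f x) (μ y) :=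
        Hfg.sub (Hf.const_mul (gy b))
      have e2 : Integrable (fun x => f x * gy x - gy b * f x - f a * gy x) (μ y) :=
        e1.sub (Hg.const_mul (f a))
      have e3 : Integrable (fun x => f x * gy x - gy b * f x - f a * gy x + f a * gy b)
          (μ y) := e2.add (integrable_const _)
      apply e3.congr
      apply Filter.Eventually.of_forall
      intro x; ring
    have hcs := cov_sq_le Hu Hv hfa2 hgb2 Huv
    have hconst : ∀ c : ℝ, ∫ _ : ℝ, c ∂(μ y) = c := fun c => by
      simp [integral_const, measure_univ]
    -- identify d y as the covariance of the centered functions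
    have hcovid : d y = (∫ x, (f x - f a) * (gy x - gy b) ∂(μ y))
        - (∫ x, f x - f a ∂(μ y)) * (∫ x, gy x - gy b ∂(μ y)) := by
      have i1 : ∫ x, (f x - f a) * (gy x - gy b) ∂(μ y)
          = ∫ x, f x * gy x ∂(μ y) - gy b * ∫ x, f x ∂(μ y)
            - f a * ∫ x, gy x ∂(μ y) + f a * gy b := by
        have e1 : Integrable (fun x => f x * gy x - gy b * f x) (μ y) :=
          Hfg.sub (Hf.const_mul (gy b))
        have e2 : Integrable (fun x => f x * gy x - gy b * f x - f a * gy x) (μ y) :=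
          e1.sub (Hg.const_mul (f a))
        rw [show (fun x => (f x - f a) * (gy x - gy b))
            = fun x => f x * gy x - gy b * f x - f a * gy x + f a * gy b from
          funext fun x => by ring]
        rw [integral_add e2 (integrable_const _), integral_sub e1 (Hg.const_mul (f a)),
          integral_sub Hfg (Hf.const_mul (gy b)), integral_const_mul, integral_const_mul,
          hconst]
      have i2 : ∫ x, f x - f a ∂(μ y) = (∫ x, f x ∂(μ y)) - f a := by
        rw [integral_sub Hf (integrable_const _), hconst]
      have i3 : ∫ x, gy x - gy b ∂(μ y) = (∫ x, gy x ∂(μ y)) - gy b := by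
        rw [integral_sub Hg (integrable_const _), hconst]
      rw [hddef, i1, i2, i3]
      ring
    have hA0 : 0 ≤ ∫ x, (f x - f a) ^ 2 ∂(μ y) := integral_nonneg fun x => sq_nonneg _
    have hB0 : 0 ≤ ∫ x, (gy x - gy b) ^ 2 ∂(μ y) := integral_nonneg fun x => sq_nonneg _
    have hprod : (∫ x, (f x - f a) ^ 2 ∂(μ y)) * (∫ x, (gy x - gy b) ^ 2 ∂(μ y))
        ≤ δ ^ 2 * k ^ 2 :=
      mul_le_mul hfaI hgbI hB0 (by positivity)
    have hsq : (d y) ^ 2 ≤ (δ * k) ^ 2 := by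
      rw [hcovid]
      calc ((∫ x, (f x - f a) * (gy x - gy b) ∂(μ y))
            - (∫ x, f x - f a ∂(μ y)) * ∫ x, gy x - gy b ∂(μ y)) ^ 2
          ≤ (∫ x, (f x - f a) ^ 2 ∂(μ y)) * (∫ x, (gy x - gy b) ^ 2 ∂(μ y)) := hcs
        _ ≤ δ ^ 2 * k ^ 2 := hprod
        _ = (δ * k) ^ 2 := by ring
    have habs : |d y| ≤ δ * k := by
      nlinarith [abs_nonneg (d y), sq_abs (d y), mul_nonneg hδ0 hk0,
        sq_nonneg (|d y| - δ * k), sq_nonneg (|d y| + δ * k)]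
    calc |d y| ≤ δ * k := habs
      _ = Cst * δ * Real.sqrt (deriv (deriv F) y) := by rw [hkdef]; ring
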